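/- With the same construction, the map K : H → H defined by K h = x_{h,1} − i x_{h,0} is linear and bounded, with ‖K h‖² = ⟨S_2 h, h⟩ + ⟨S_0 h, h⟩ ≤ (‖S_0‖ + ‖S_2‖)‖h‖². -/

import Mathlib

open scoped ComplexOrder

/-- The Hankel sesquilinear form `Φ((h_j),(g_k)) = ∑_{j,k} ⟨S_{j+k} h_j, g_k⟩` on finitely
supported `H`-valued sequences. -/
noncomputable def hankelForm {H : Type*} [NormedAddCommGroup H] [InnerProductSpace ℂ H]
    (S : ℕ → H →L[ℂ] H) (u v : ℕ →₀ H) : ℂ :=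
  ∑ j ∈ u.support, ∑ k ∈ v.support, (inner ℂ (u j) (S (j + k) (v k)) : ℂ)

lemma hankelForm_single {H : Type*} [NormedAddCommGroup H] [InnerProductSpace ℂ H]
    (S : ℕ → H →L[ℂ] H) (j k : ℕ) (h g : H) :
    hankelForm S (Finsupp.single j h) (Finsupp.single k g) = inner ℂ h (S (j + k) g) := by
  rcases eq_or_ne h 0 with rfl | hh
  · simp [hankelForm]
  rcases eq_or_ne g 0 with rfl | hg
  · simp [hankelForm]
  rw [hankelForm, Finsupp.support_single_ne_zero _ hh, Finsupp.support_single_ne_zero _ hg]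
  simp

/-- the map `K h = x_{h,1} - i x_{h,0}` is linear and bounded, with
`‖K h‖² = ⟨S₂ h, h⟩ + ⟨S₀ h, h⟩ ≤ (‖S₀‖ + ‖S₂‖) ‖h‖²`. -/
theorem stmt8 {H K : Type*}
    [NormedAddCommGroup H] [InnerProductSpace ℂ H] [CompleteSpace H]
    [NormedAddCommGroup K] [InnerProductSpace ℂ K] [CompleteSpace K]
    (S : ℕ → H →L[ℂ] H)
    (hpos : ∀ (r : ℕ) (h : ℕ → H),
      0 ≤ ∑ k ∈ Finset.range (r + 1), ∑ l ∈ Finset.range (r + 1),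
        (inner ℂ (h k) (S (k + l) (h l)) : ℂ))
    (e : (ℕ →₀ H) →ₗ[ℂ] K) (hdense : DenseRange e)
    (hinner : ∀ u v : ℕ →₀ H, (inner ℂ (e u) (e v) : ℂ) = hankelForm S u v) :
    IsLinearMap ℂ
        (fun h : H => e (Finsupp.single 1 h) - Complex.I • e (Finsupp.single 0 h))
      ∧ (∀ h : H,
          ((‖e (Finsupp.single 1 h) - Complex.I • e (Finsupp.single 0 h)‖ ^ 2 : ℝ) : ℂ)
            = (inner ℂ h (S 2 h) : ℂ) + (inner ℂ h (S 0 h) : ℂ))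
      ∧ (∀ h : H,
          ‖e (Finsupp.single 1 h) - Complex.I • e (Finsupp.single 0 h)‖ ^ 2
            ≤ (‖S 0‖ + ‖S 2‖) * ‖h‖ ^ 2) := by
  have key : ∀ h : H,
      ((‖e (Finsupp.single 1 h) - Complex.I • e (Finsupp.single 0 h)‖ ^ 2 : ℝ) : ℂ)
        = (inner ℂ h (S 2 h) : ℂ) + (inner ℂ h (S 0 h) : ℂ) := by
    intro h
    set a := e (Finsupp.single 1 h)
    set b := e (Finsupp.single 0 h)
    have hnorm : ((‖a - Complex.I • b‖ ^ 2 : ℝ) : ℂ)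
        = inner ℂ (a - Complex.I • b) (a - Complex.I • b) := by
      rw [inner_self_eq_norm_sq_to_K]; norm_cast
    rw [hnorm]
    have expand : (inner ℂ (a - Complex.I • b) (a - Complex.I • b) : ℂ)
        = inner ℂ a a - Complex.I * inner ℂ a b
          + Complex.I * inner ℂ b a + inner ℂ b b := by
      simp only [inner_sub_sub_self, inner_smul_left, inner_smul_right, Complex.conj_I]
      ring_nf
      rw [Complex.I_sq]
      ring
    have haa : (inner ℂ a a : ℂ) = inner ℂ h (S 2 h) := by
      rw [hinner, hankelForm_single]
    have hbb : (inner ℂ b b : ℂ) = inner ℂ h (S 0 h) := by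
      rw [hinner, hankelForm_single]
    have hab : (inner ℂ a b : ℂ) = inner ℂ h (S 1 h) := by
      rw [hinner, hankelForm_single]
    have hba : (inner ℂ b a : ℂ) = inner ℂ h (S 1 h) := by
      rw [hinner, hankelForm_single]
    rw [expand, haa, hbb, hab, hba]
    ring
  refine ⟨?_, key, ?_⟩
  · constructor
    · intro x y
      simp only [Finsupp.single_add, map_add, smul_add]
      abel
    · intro c x
      simp only [← Finsupp.smul_single, map_smul, smul_sub, smul_comm c Complex.I]
  · intro h
    have := key h
    have hre : (‖e (Finsupp.single 1 h) - Complex.I • e (Finsupp.single 0 h)‖ ^ 2 : ℝ)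
        = Complex.re ((inner ℂ h (S 2 h) : ℂ) + (inner ℂ h (S 0 h) : ℂ)) := by
      rw [← this]; exact (Complex.ofReal_re _).symm
    rw [hre]
    have b2 : Complex.re (inner ℂ h (S 2 h) : ℂ) ≤ ‖S 2‖ * ‖h‖ ^ 2 := by
      calc Complex.re (inner ℂ h (S 2 h) : ℂ) ≤ ‖(inner ℂ h (S 2 h) : ℂ)‖ :=
            Complex.re_le_norm _
        _ ≤ ‖h‖ * ‖S 2 h‖ := norm_inner_le_norm _ _
        _ ≤ ‖h‖ * (‖S 2‖ * ‖h‖) := by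
            gcongr; exact (S 2).le_opNorm h
        _ = ‖S 2‖ * ‖h‖ ^ 2 := by ring
    have b0 : Complex.re (inner ℂ h (S 0 h) : ℂ) ≤ ‖S 0‖ * ‖h‖ ^ 2 := by
      calc Complex.re (inner ℂ h (S 0 h) : ℂ) ≤ ‖(inner ℂ h (S 0 h) : ℂ)‖ :=
            Complex.re_le_norm _
        _ ≤ ‖h‖ * ‖S 0 h‖ := norm_inner_le_norm _ _
        _ ≤ ‖h‖ * (‖S 0‖ * ‖h‖) := by
            gcongr; exact (S 0).le_opNorm h
        _ = ‖S 0‖ * ‖h‖ ^ 2 := by ring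
    simp only [Complex.add_re]
    nlinarith [b2, b0]
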